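/- Let p and d be natural numbers, let X ⊂ ℝ^d be compact, let e be an MPLang expression appropriate for input arity d, and let ε > 0 be a real number. Then there exists a ReLU-MPLang expression e' appropriate for input arity d such that ρ_{𝔾_p,X}(e, e') ≤ ε, i.e., |e(G)(χ)(v) − e'(G)(χ)(v)| ≤ ε for every graph G ∈ 𝔾_p, every d-dimensional feature map χ on G with image contained in X, and every node v of G. -/

import Mathlib

open scoped BigOperators

/-- A finite graph: nodes `Fin n`, with a symmetric, irreflexive adjacency relation. -/
structure MPLGraph where
  n : ℕ
  adj : Fin n → Fin n → Bool
  symm : ∀ u v, adj u v = adj v u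
  irrefl : ∀ v, adj v v = false

namespace MPLGraph

/-- The set of neighbors of `v` in `G`. -/
def neighbors (G : MPLGraph) (v : Fin G.n) : Finset (Fin G.n) :=
  Finset.univ.filter fun u => G.adj v u

/-- The degree of a node. -/
def degree (G : MPLGraph) (v : Fin G.n) : ℕ := (G.neighbors v).card

/-- `G` has degree at most `p` (i.e., `G ∈ 𝔾_p`). -/
def DegreeLE (G : MPLGraph) (p : ℕ) : Prop := ∀ v, G.degree v ≤ p

end MPLGraph

/-- The rectified linear unit. -/
noncomputable def ReLU (x : ℝ) : ℝ := max 0 x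

/-- An MPNN layer of type `d → r`: matrices `W₁, W₂ ∈ ℝ^{r×d}`, bias `b ∈ ℝ^r`,
and a continuous activation function `σ`. -/
structure Layer (d r : ℕ) where
  W₁ : Matrix (Fin r) (Fin d) ℝ
  W₂ : Matrix (Fin r) (Fin d) ℝ
  b : Fin r → ℝ
  σ : ℝ → ℝ
  hσ : Continuous σ

namespace Layer

/-- The GFMT defined by a layer:
`L(G)(χ)(v) = σ(W₁ χ(v) + W₂ Σ_{u ∈ N_G(v)} χ(u) + b)`, componentwise. -/
noncomputable def eval {d r : ℕ} (L : Layer d r) (G : MPLGraph)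
    (χ : Fin G.n → Fin d → ℝ) (v : Fin G.n) : Fin r → ℝ :=
  fun i => L.σ (L.W₁.mulVec (χ v) i + L.W₂.mulVec (∑ u ∈ G.neighbors v, χ u) i + L.b i)

end Layer

/-- An MPNN: a nonempty sequence of layers with matching arities. -/
inductive MPNN : ℕ → ℕ → Type where
  | single {d r : ℕ} : Layer d r → MPNN d r
  | cons {d m r : ℕ} : Layer d m → MPNN m r → MPNN d r

namespace MPNN

/-- The GFMT defined by an MPNN: the sequential composition of its layers. -/
noncomputable def eval : {d r : ℕ} → MPNN d r → (G : MPLGraph) →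
    (Fin G.n → Fin d → ℝ) → (Fin G.n → Fin r → ℝ)
  | _, _, .single L, G, χ => L.eval G χ
  | _, _, .cons L N, G, χ => N.eval G (L.eval G χ)

/-- A ReLU-MPNN: every layer uses ReLU, except that the last layer may use the identity. -/
def IsReLU : {d r : ℕ} → MPNN d r → Prop
  | _, _, .single L => L.σ = ReLU ∨ L.σ = id
  | _, _, .cons L N => L.σ = ReLU ∧ N.IsReLU

/-- The set of activation functions used in the layers of an MPNN. -/
def activations : {d r : ℕ} → MPNN d r → Set (ℝ → ℝ)
  | _, _, .single L => {L.σ}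
  | _, _, .cons L N => insert L.σ N.activations

/-- The number of layers of an MPNN. -/
def numLayers : {d r : ℕ} → MPNN d r → ℕ
  | _, _, .single _ => 1
  | _, _, .cons _ N => N.numLayers + 1

end MPNN

/-- MPLang expressions: `e ::= 1 | P_i | a·e | e + e | f(e) | ◇e`
with `f : ℝ → ℝ` continuous. -/
inductive MPLang : Type where
  | one : MPLang
  | proj : ℕ → MPLang
  | scale : ℝ → MPLang → MPLang
  | add : MPLang → MPLang → MPLang
  | app : (f : ℝ → ℝ) → Continuous f → MPLang → MPLang
  | diamond : MPLang → MPLang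

namespace MPLang

/-- `e` is appropriate for input arity `d`: every `P_i` has `1 ≤ i ≤ d`. -/
def Appropriate (d : ℕ) : MPLang → Prop
  | .one => True
  | .proj i => 1 ≤ i ∧ i ≤ d
  | .scale _ e => e.Appropriate d
  | .add e₁ e₂ => e₁.Appropriate d ∧ e₂.Appropriate d
  | .app _ _ e => e.Appropriate d
  | .diamond e => e.Appropriate d

/-- Semantics of MPLang expressions (the `P_i` are 1-based; out-of-range
projections, which cannot occur in expressions appropriate for `d`, yield 0). -/
noncomputable def eval (d : ℕ) : MPLang → (G : MPLGraph) →
    (Fin G.n → Fin d → ℝ) → Fin G.n → ℝ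
  | .one, _, _, _ => 1
  | .proj i, _, χ, v => if h : i - 1 < d then χ v ⟨i - 1, h⟩ else 0
  | .scale a e, G, χ, v => a * e.eval d G χ v
  | .add e₁ e₂, G, χ, v => e₁.eval d G χ v + e₂.eval d G χ v
  | .app f _ e, G, χ, v => f (e.eval d G χ v)
  | .diamond e, G, χ, v => ∑ u ∈ G.neighbors v, e.eval d G χ u

/-- All function applications in the expression apply functions from `F`. -/
def AppsIn (F : Set (ℝ → ℝ)) : MPLang → Prop
  | .one => True
  | .proj _ => True
  | .scale _ e => e.AppsIn F
  | .add e₁ e₂ => e₁.AppsIn F ∧ e₂.AppsIn F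
  | .app f _ e => f ∈ F ∧ e.AppsIn F
  | .diamond e => e.AppsIn F

/-- A ReLU-MPLang expression: all function applications apply ReLU. -/
def IsReLU (e : MPLang) : Prop := e.AppsIn {ReLU}

end MPLang

lemma relu_cont : Continuous ReLU := continuous_const.max continuous_id

noncomputable def pl (c₀ : ℝ) (l : List (ℝ × ℝ)) (x : ℝ) : ℝ :=
  c₀ + (l.map fun q => q.1 * ReLU (x - q.2)).sum

lemma list_range_sum (g : ℕ → ℝ) (N : ℕ) :
    ((List.range N).map g).sum = ∑ k ∈ Finset.range N, g k := by
  induction N with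
  | zero => simp
  | succ n ih => simp [List.range_succ, Finset.sum_range_succ, ih]

lemma pl_approx (f : ℝ → ℝ) (hf : Continuous f) (A B ε : ℝ) (hε : 0 < ε) :
    ∃ c₀ l, ∀ x ∈ Set.Icc A B, |f x - pl c₀ l x| ≤ ε := by
  have hc : UniformContinuousOn f (Set.Icc A (B + 1)) :=
    isCompact_Icc.uniformContinuousOn_of_continuous hf.continuousOn
  rw [Metric.uniformContinuousOn_iff_le] at hc
  obtain ⟨δ, hδ0, hmod⟩ := hc ε hε
  set δ' : ℝ := min δ 1 with hδ'def
  have hδ' : 0 < δ' := lt_min hδ0 one_pos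
  have hδ'd : δ' ≤ δ := min_le_left _ _
  have hδ'1 : δ' ≤ 1 := min_le_right _ _
  set t : ℕ → ℝ := fun k => A + k * δ' with ht
  set y : ℕ → ℝ := fun k => f (t k) with hy
  set s : ℕ → ℝ := fun k => (y (k + 1) - y k) / δ' with hs
  set dd : ℕ → ℝ := fun k => if k = 0 then s 0 else s k - s (k - 1) with hdd
  set N : ℕ := (⌈(B - A) / δ'⌉).toNat + 1 with hN
  have hstep : ∀ k, s k * δ' = y (k + 1) - y k := fun k => div_mul_cancel₀ _ hδ'.ne'
  have htc : ∀ k : ℕ, t (k + 1) = t k + δ' := by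
    intro k; simp only [ht]; push_cast; ring
  have key : ∀ j : ℕ, ∀ x : ℝ,
      ∑ k ∈ Finset.range (j + 1), dd k * (x - t k) = s j * (x - t j) + (y j - y 0) := by
    intro j
    induction j with
    | zero => intro x; simp [hdd]
    | succ j ih =>
      intro x
      rw [Finset.sum_range_succ, ih]
      have h1 : dd (j + 1) = s (j + 1) - s j := by simp [hdd]
      rw [h1]
      linear_combination hstep j + s j * htc j
  refine ⟨y 0, (List.range N).map fun k => (dd k, t k), ?_⟩
  intro x hx
  have hplx : pl (y 0) ((List.range N).map fun k => (dd k, t k)) x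
      = y 0 + ∑ k ∈ Finset.range N, dd k * ReLU (x - t k) := by
    simp only [pl, List.map_map]
    rw [show ((fun q : ℝ × ℝ => q.1 * ReLU (x - q.2)) ∘ fun k => (dd k, t k))
        = fun k => dd k * ReLU (x - t k) from rfl, list_range_sum]
  set u : ℝ := (x - A) / δ' with hu
  have hu0 : 0 ≤ u := div_nonneg (by linarith [hx.1]) hδ'.le
  set j : ℕ := (⌊u⌋).toNat with hj
  have hjfl : (j : ℤ) = ⌊u⌋ := Int.toNat_of_nonneg (Int.floor_nonneg.2 hu0)
  have hjr : (j : ℝ) = (⌊u⌋ : ℝ) := by exact_mod_cast hjfl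
  have hxl : t j ≤ x := by
    have h1 : (j : ℝ) ≤ u := by rw [hjr]; exact Int.floor_le u
    have h2 : (j : ℝ) * δ' ≤ x - A := by
      calc (j : ℝ) * δ' ≤ u * δ' := by nlinarith
        _ = x - A := by rw [hu]; exact div_mul_cancel₀ _ hδ'.ne'
    simp only [ht]; linarith
  have hxr : x ≤ t (j + 1) := by
    have h1 : u < (j : ℝ) + 1 := by rw [hjr]; exact Int.lt_floor_add_one u
    have h2 : x - A < ((j : ℝ) + 1) * δ' := by
      have h3 : u * δ' = x - A := by rw [hu]; exact div_mul_cancel₀ _ hδ'.ne'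
      nlinarith
    simp only [ht]; push_cast; linarith
  have hjN : j < N := by
    have h1 : ⌊u⌋ ≤ ⌈(B - A) / δ'⌉ := by
      refine (Int.floor_le_ceil u).trans (Int.ceil_le_ceil ?_)
      rw [hu]
      gcongr <;> linarith [hx.2]
    omega
  have hsplit : ∑ k ∈ Finset.range N, dd k * ReLU (x - t k)
      = ∑ k ∈ Finset.range (j + 1), dd k * (x - t k) := by
    have h0 : ∀ k ∈ Finset.range (j + 1), dd k * ReLU (x - t k) = dd k * (x - t k) := by
      intro k hk
      have hk' : k ≤ j := by simpa [Nat.lt_succ_iff] using Finset.mem_range.1 hk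
      have htk : t k ≤ t j := by
        simp only [ht]
        have hkc : (k : ℝ) ≤ j := by exact_mod_cast hk'
        nlinarith
      have hr : ReLU (x - t k) = x - t k := max_eq_right (by linarith)
      rw [hr]
    have h1 : ∀ k ∈ Finset.Ico (j + 1) N, dd k * ReLU (x - t k) = 0 := by
      intro k hk
      obtain ⟨hk1, _⟩ := Finset.mem_Ico.1 hk
      have htk : t (j + 1) ≤ t k := by
        simp only [ht]
        have hkc : ((j : ℝ) + 1) ≤ k := by exact_mod_cast hk1
        push_cast
        nlinarith
      have hr : ReLU (x - t k) = 0 := max_eq_left (by linarith)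
      rw [hr, mul_zero]
    rw [Finset.range_eq_Ico, ← Finset.sum_Ico_consecutive _ (Nat.zero_le (j + 1)) hjN,
        ← Finset.range_eq_Ico, Finset.sum_congr rfl h0, Finset.sum_eq_zero h1, add_zero]
  rw [hplx, hsplit, key j x]
  set θ : ℝ := (x - t j) / δ' with hθdef
  have hθ0 : 0 ≤ θ := div_nonneg (by linarith) hδ'.le
  have hθ1 : θ ≤ 1 := by
    rw [hθdef, div_le_one hδ']
    have := htc j; linarith
  have hA1 : x ∈ Set.Icc A (B + 1) := ⟨hx.1, by linarith [hx.2]⟩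
  have htjA : A ≤ t j := by
    have hp : (0 : ℝ) ≤ (j : ℝ) * δ' := by positivity
    simp only [ht]; linarith
  have htjmem : t j ∈ Set.Icc A (B + 1) := ⟨htjA, by linarith [hx.2]⟩
  have htj1mem : t (j + 1) ∈ Set.Icc A (B + 1) := by
    constructor
    · have hp : (0 : ℝ) ≤ ((j : ℝ) + 1) * δ' := by positivity
      simp only [ht]; push_cast; linarith
    · have := htc j; linarith [hx.2]
  have h1 : |f x - y j| ≤ ε := by
    have hd : dist x (t j) ≤ δ := by
      rw [Real.dist_eq, abs_of_nonneg (by linarith)]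
      have := htc j; linarith
    have := hmod x hA1 (t j) htjmem hd
    rw [Real.dist_eq] at this
    simpa [hy] using this
  have h2 : |f x - y (j + 1)| ≤ ε := by
    have hd : dist x (t (j + 1)) ≤ δ := by
      rw [Real.dist_eq, abs_of_nonpos (by linarith)]
      have := htc j; linarith
    have := hmod x hA1 (t (j + 1)) htj1mem hd
    rw [Real.dist_eq] at this
    simpa [hy] using this
  have hsθ : s j * (x - t j) = (y (j + 1) - y j) * θ := by
    rw [hθdef]
    simp only [hs]
    field_simp
  have hrepr : f x - (y 0 + (s j * (x - t j) + (y j - y 0)))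
      = (1 - θ) * (f x - y j) + θ * (f x - y (j + 1)) := by
    rw [hsθ]; ring
  rw [hrepr]
  calc |(1 - θ) * (f x - y j) + θ * (f x - y (j + 1))|
      ≤ |(1 - θ) * (f x - y j)| + |θ * (f x - y (j + 1))| := abs_add_le _ _
    _ = (1 - θ) * |f x - y j| + θ * |f x - y (j + 1)| := by
        rw [abs_mul, abs_mul, abs_of_nonneg (by linarith), abs_of_nonneg hθ0]
    _ ≤ (1 - θ) * ε + θ * ε :=
        add_le_add (mul_le_mul_of_nonneg_left h1 (by linarith))
          (mul_le_mul_of_nonneg_left h2 hθ0)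
    _ = ε := by ring


noncomputable def plExpr (e : MPLang) (c₀ : ℝ) (l : List (ℝ × ℝ)) : MPLang :=
  l.foldr (fun q acc => MPLang.add (MPLang.scale q.1
    (MPLang.app ReLU relu_cont (MPLang.add e (MPLang.scale (-q.2) MPLang.one)))) acc)
    (MPLang.scale c₀ MPLang.one)

lemma plExpr_eval (e : MPLang) (c₀ : ℝ) (l : List (ℝ × ℝ)) (d : ℕ) (G : MPLGraph)
    (χ : Fin G.n → Fin d → ℝ) (v : Fin G.n) :
    (plExpr e c₀ l).eval d G χ v = pl c₀ l (e.eval d G χ v) := by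
  induction l with
  | nil => simp [plExpr, pl, MPLang.eval]
  | cons q l ih =>
    simp only [plExpr, List.foldr_cons, MPLang.eval, pl, List.map_cons, List.sum_cons] at ih ⊢
    rw [ih]
    have harg : e.eval d G χ v + -q.2 * 1 = e.eval d G χ v - q.2 := by ring
    rw [harg]
    ring

lemma plExpr_appropriate (e : MPLang) (c₀ : ℝ) (l : List (ℝ × ℝ)) (d : ℕ)
    (he : e.Appropriate d) : (plExpr e c₀ l).Appropriate d := by
  induction l with
  | nil => exact trivial
  | cons q l ih => exact ⟨⟨he, trivial⟩, ih⟩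

lemma plExpr_isReLU (e : MPLang) (c₀ : ℝ) (l : List (ℝ × ℝ))
    (he : e.IsReLU) : (plExpr e c₀ l).IsReLU := by
  induction l with
  | nil => exact trivial
  | cons q l ih => exact ⟨⟨rfl, he, trivial⟩, ih⟩

lemma mplang_bound (p d : ℕ) (X : Set (Fin d → ℝ)) (hX : IsCompact X) (e : MPLang)
    (he : e.Appropriate d) : ∃ M : ℝ, 0 ≤ M ∧
      ∀ (G : MPLGraph), G.DegreeLE p →
        ∀ χ : Fin G.n → Fin d → ℝ, (∀ v, χ v ∈ X) →
          ∀ v, |e.eval d G χ v| ≤ M := by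
  induction e with
  | one =>
    exact ⟨1, zero_le_one, fun G _ χ _ v => by simp [MPLang.eval]⟩
  | proj i =>
    obtain ⟨r, hr⟩ := hX.isBounded.subset_closedBall 0
    refine ⟨max r 0, le_max_right _ _, fun G _ χ hχ v => ?_⟩
    simp only [MPLang.eval]
    split_ifs with h
    · have h1 : ‖χ v ⟨i - 1, h⟩‖ ≤ ‖χ v‖ := norm_le_pi_norm (χ v) _
      have h2 : ‖χ v‖ ≤ r := by
        have := hr (hχ v)
        rwa [Metric.mem_closedBall, dist_zero_right] at this
      rw [Real.norm_eq_abs] at h1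
      exact h1.trans (h2.trans (le_max_left _ _))
    · simp [le_max_iff]
  | scale a e ih =>
    obtain ⟨M, hM0, hM⟩ := ih he
    refine ⟨|a| * M, by positivity, fun G hG χ hχ v => ?_⟩
    simp only [MPLang.eval, abs_mul]
    exact mul_le_mul_of_nonneg_left (hM G hG χ hχ v) (abs_nonneg a)
  | add e₁ e₂ ih₁ ih₂ =>
    obtain ⟨M₁, hM₁0, hM₁⟩ := ih₁ he.1
    obtain ⟨M₂, hM₂0, hM₂⟩ := ih₂ he.2
    refine ⟨M₁ + M₂, by linarith, fun G hG χ hχ v => ?_⟩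
    simp only [MPLang.eval]
    exact (abs_add_le _ _).trans (add_le_add (hM₁ G hG χ hχ v) (hM₂ G hG χ hχ v))
  | app f hf e ih =>
    obtain ⟨M, hM0, hM⟩ := ih he
    obtain ⟨C, hC⟩ := (isCompact_Icc (a := -M) (b := M)).exists_bound_of_continuousOn
      hf.continuousOn
    refine ⟨max C 0, le_max_right _ _, fun G hG χ hχ v => ?_⟩
    simp only [MPLang.eval]
    have hmem : e.eval d G χ v ∈ Set.Icc (-M) M := by
      have := hM G hG χ hχ v
      rw [abs_le] at this
      exact this
    have := hC _ hmem
    rw [Real.norm_eq_abs] at this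
    exact this.trans (le_max_left _ _)
  | diamond e ih =>
    obtain ⟨M, hM0, hM⟩ := ih he
    refine ⟨p * M, by positivity, fun G hG χ hχ v => ?_⟩
    simp only [MPLang.eval]
    calc |∑ u ∈ G.neighbors v, e.eval d G χ u|
        ≤ ∑ u ∈ G.neighbors v, |e.eval d G χ u| := Finset.abs_sum_le_sum_abs _ _
      _ ≤ (G.neighbors v).card • M :=
          Finset.sum_le_card_nsmul _ _ _ (fun u _ => hM G hG χ hχ u)
      _ = ((G.neighbors v).card : ℝ) * M := nsmul_eq_mul _ _
      _ ≤ p * M := by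
          have : ((G.neighbors v).card : ℝ) ≤ p := by exact_mod_cast hG v
          exact mul_le_mul_of_nonneg_right this hM0

lemma mplang_approx_aux (p d : ℕ) (X : Set (Fin d → ℝ)) (hX : IsCompact X) (e : MPLang) :
    e.Appropriate d → ∀ ε : ℝ, 0 < ε →
      ∃ e' : MPLang, e'.Appropriate d ∧ e'.IsReLU ∧
        ∀ (G : MPLGraph), G.DegreeLE p →
          ∀ χ : Fin G.n → Fin d → ℝ, (∀ v, χ v ∈ X) →
            ∀ v : Fin G.n, |e.eval d G χ v - e'.eval d G χ v| ≤ ε := by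
  induction e with
  | one =>
    intro _ ε hε
    exact ⟨.one, trivial, trivial, fun G _ χ _ v => by simp [MPLang.eval]; linarith⟩
  | proj i =>
    intro he ε hε
    exact ⟨.proj i, he, trivial, fun G _ χ _ v => by simp [MPLang.eval]; linarith⟩
  | scale a e ih =>
    intro he ε hε
    obtain ⟨e', ha, hr, hb⟩ := ih he (ε / (|a| + 1)) (by positivity)
    refine ⟨.scale a e', ha, hr, fun G hG χ hχ v => ?_⟩
    simp only [MPLang.eval]
    rw [← mul_sub, abs_mul]
    have h1 : |a| * |e.eval d G χ v - e'.eval d G χ v| ≤ |a| * (ε / (|a| + 1)) :=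
      mul_le_mul_of_nonneg_left (hb G hG χ hχ v) (abs_nonneg a)
    have h2 : |a| * (ε / (|a| + 1)) ≤ ε := by
      rw [mul_comm, div_mul_eq_mul_div, div_le_iff₀ (by positivity : (0:ℝ) < |a| + 1)]
      nlinarith [abs_nonneg a]
    linarith
  | add e₁ e₂ ih₁ ih₂ =>
    intro he ε hε
    obtain ⟨e₁', ha₁, hr₁, hb₁⟩ := ih₁ he.1 (ε / 2) (by positivity)
    obtain ⟨e₂', ha₂, hr₂, hb₂⟩ := ih₂ he.2 (ε / 2) (by positivity)
    refine ⟨.add e₁' e₂', ⟨ha₁, ha₂⟩, ⟨hr₁, hr₂⟩, fun G hG χ hχ v => ?_⟩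
    simp only [MPLang.eval]
    have h0 : e₁.eval d G χ v + e₂.eval d G χ v - (e₁'.eval d G χ v + e₂'.eval d G χ v)
        = (e₁.eval d G χ v - e₁'.eval d G χ v) + (e₂.eval d G χ v - e₂'.eval d G χ v) := by
      ring
    rw [h0]
    have := (abs_add_le _ _).trans (add_le_add (hb₁ G hG χ hχ v) (hb₂ G hG χ hχ v))
    linarith
  | app f hf e ih =>
    intro he ε hε
    obtain ⟨M, hM0, hM⟩ := mplang_bound p d X hX e he
    have hc : UniformContinuousOn f (Set.Icc (-(M + 1)) (M + 1)) :=
      isCompact_Icc.uniformContinuousOn_of_continuous hf.continuousOn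
    rw [Metric.uniformContinuousOn_iff_le] at hc
    obtain ⟨δ, hδ0, hmod⟩ := hc (ε / 2) (by positivity)
    obtain ⟨c₀, l, hpl⟩ := pl_approx f hf (-(M + 1)) (M + 1) (ε / 2) (by positivity)
    set η : ℝ := min δ 1 with hη
    obtain ⟨e', ha, hr, hb⟩ := ih he η (lt_min hδ0 one_pos)
    refine ⟨plExpr e' c₀ l, plExpr_appropriate _ _ _ _ ha, plExpr_isReLU _ _ _ hr,
      fun G hG χ hχ v => ?_⟩
    have hbd := hM G hG χ hχ v
    have hdiff := hb G hG χ hχ v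
    have hη1 : η ≤ 1 := min_le_right _ _
    have hηδ : η ≤ δ := min_le_left _ _
    rw [abs_le] at hbd hdiff
    have hxe : e.eval d G χ v ∈ Set.Icc (-(M + 1)) (M + 1) := ⟨by linarith [hbd.1], by linarith [hbd.2]⟩
    have hxe' : e'.eval d G χ v ∈ Set.Icc (-(M + 1)) (M + 1) :=
      ⟨by linarith [hbd.1, hdiff.2], by linarith [hbd.2, hdiff.1]⟩
    have h1 : |f (e.eval d G χ v) - f (e'.eval d G χ v)| ≤ ε / 2 := by
      have hd : dist (e.eval d G χ v) (e'.eval d G χ v) ≤ δ := by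
        rw [Real.dist_eq]
        rw [← abs_le] at hdiff
        linarith
      have := hmod _ hxe _ hxe' hd
      rwa [Real.dist_eq] at this
    have h2 : |f (e'.eval d G χ v) - pl c₀ l (e'.eval d G χ v)| ≤ ε / 2 := hpl _ hxe'
    rw [plExpr_eval]
    simp only [MPLang.eval]
    calc |f (e.eval d G χ v) - pl c₀ l (e'.eval d G χ v)|
        ≤ |f (e.eval d G χ v) - f (e'.eval d G χ v)|
          + |f (e'.eval d G χ v) - pl c₀ l (e'.eval d G χ v)| := abs_sub_le _ _ _
      _ ≤ ε / 2 + ε / 2 := add_le_add h1 h2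
      _ = ε := by ring
  | diamond e ih =>
    intro he ε hε
    obtain ⟨e', ha, hr, hb⟩ := ih he (ε / (p + 1)) (by positivity)
    refine ⟨.diamond e', ha, hr, fun G hG χ hχ v => ?_⟩
    simp only [MPLang.eval]
    rw [← Finset.sum_sub_distrib]
    calc |∑ u ∈ G.neighbors v, (e.eval d G χ u - e'.eval d G χ u)|
        ≤ ∑ u ∈ G.neighbors v, |e.eval d G χ u - e'.eval d G χ u| :=
          Finset.abs_sum_le_sum_abs _ _
      _ ≤ (G.neighbors v).card • (ε / (p + 1)) :=
          Finset.sum_le_card_nsmul _ _ _ (fun u _ => hb G hG χ hχ u)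
      _ = ((G.neighbors v).card : ℝ) * (ε / (p + 1)) := nsmul_eq_mul _ _
      _ ≤ (p : ℝ) * (ε / (p + 1)) := by
          have hcard : ((G.neighbors v).card : ℝ) ≤ p := by exact_mod_cast hG v
          exact mul_le_mul_of_nonneg_right hcard (by positivity)
      _ ≤ ε := by
          rw [mul_comm, div_mul_eq_mul_div, div_le_iff₀ (by positivity : (0:ℝ) < (p:ℝ) + 1)]
          nlinarith [Nat.cast_nonneg (α := ℝ) p]


/-- Theorem 3 of the paper: over graphs of degree at most `p`
and feature maps with values in a compact set `X`, every MPLang expression can be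
uniformly approximated by a ReLU-MPLang expression. -/
theorem mplang_approx_by_relu_mplang (p d : ℕ) (X : Set (Fin d → ℝ))
    (hX : IsCompact X) (e : MPLang) (he : e.Appropriate d)
    (ε : ℝ) (hε : 0 < ε) :
    ∃ e' : MPLang, e'.Appropriate d ∧ e'.IsReLU ∧
      ∀ (G : MPLGraph), G.DegreeLE p →
        ∀ χ : Fin G.n → Fin d → ℝ, (∀ v, χ v ∈ X) →
          ∀ v : Fin G.n, |e.eval d G χ v - e'.eval d G χ v| ≤ ε := by
  exact mplang_approx_aux p d X hX e he ε hε
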